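/- Let Ψ be a branching mechanism with Ψ'(0+) = -∞ and ∫_{0+} du/Ψ(u) = -∞, and suppose there exist λ > 0 and α > 0 such that ∫_0^λ |1/Ψ(u) - 1/(α·u·log u)| du < ∞. Then with G(y) = exp(-∫_y^λ du/Ψ(u)), one has G(1/y) ~ k_λ·(log y)^{1/α} as y → +∞, for some constant k_λ ∈ (0,∞); explicitly, G(1/y)/(log y)^{1/α} → exp(-∫_0^λ (1/Ψ(u) - 1/(α u log u)) du - (1/α)·log log(1/λ)). -/

import Mathlib

open MeasureTheory Real Filter

/-- If `Ψ` has infinite mean (`Ψ(u)/u → -∞` at `0+`), `∫_{0+} du/Ψ = -∞`, and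
`1/Ψ(u) - 1/(α u log u)` is integrable near `0`, then
`G(1/y) ~ k_λ (log y)^{1/α}` as `y → ∞`, with the explicit constant
`k_λ = exp(-∫_0^λ (1/Ψ(u) - 1/(α u log u)) du - (1/α) log log(1/λ))`. -/
theorem G_asymptotics (Ψ : ℝ → ℝ)
    (hcont : ContinuousOn Ψ (Set.Ioi 0))
    (hneg : ∀ u : ℝ, 0 < u → u < 1 → Ψ u < 0)
    (hmean : Tendsto (fun u => Ψ u / u) (nhdsWithin 0 (Set.Ioi 0)) atBot)
    (lam : ℝ) (hlam : 0 < lam) (hlam1 : lam < 1)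
    (α : ℝ) (hα : 0 < α)
    (hzero : Tendsto (fun a => ∫ u in a..lam, 1 / Ψ u)
      (nhdsWithin 0 (Set.Ioi 0)) atBot)
    (hint : IntegrableOn (fun u => 1 / Ψ u - 1 / (α * u * Real.log u))
      (Set.Ioc 0 lam))
    (G : ℝ → ℝ) (hG : ∀ y : ℝ, G y = Real.exp (-(∫ u in y..lam, 1 / Ψ u))) :
    Tendsto (fun y : ℝ => G (1 / y) / (Real.log y) ^ ((1:ℝ) / α)) atTop
      (nhds (Real.exp
        (-(∫ u in Set.Ioc (0:ℝ) lam, (1 / Ψ u - 1 / (α * u * Real.log u)))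
          - (1 / α) * Real.log (Real.log (1 / lam))))) := by
  set f : ℝ → ℝ := fun u => 1 / Ψ u - 1 / (α * u * Real.log u) with hf
  set g : ℝ → ℝ := fun u => 1 / (α * u * Real.log u) with hg
  set I : ℝ := ∫ u in Set.Ioc (0:ℝ) lam, f u with hI
  set c : ℝ := (1 / α) * Real.log (Real.log (1 / lam)) with hc
  -- interval integrability of f on [0, lam]
  have hfint : IntervalIntegrable f volume 0 lam := by
    rw [intervalIntegrable_iff_integrableOn_Ioc_of_le hlam.le]
    exact hint
  -- continuity of the primitive of f
  have hprim : ContinuousOn (fun b => ∫ x in (0:ℝ)..b, f x) (Set.uIcc 0 lam) :=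
    intervalIntegral.continuousOn_primitive_interval' hfint Set.left_mem_uIcc
  -- 1/Ψ and g are continuous on (0,1)
  have hΨcont : ContinuousOn (fun u => 1 / Ψ u) (Set.Ioo 0 1) := by
    apply ContinuousOn.div continuousOn_const
    · exact hcont.mono (fun x hx => hx.1)
    · intro x hx; exact (hneg x hx.1 hx.2).ne
  have hdenne : ∀ u : ℝ, u ∈ Set.Ioo (0:ℝ) 1 → α * u * Real.log u ≠ 0 := by
    intro u hu
    have hlog : Real.log u < 0 := Real.log_neg hu.1 hu.2
    have : α * u * Real.log u < 0 :=
      mul_neg_of_pos_of_neg (mul_pos hα hu.1) hlog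
    exact this.ne
  have hgcont : ContinuousOn g (Set.Ioo 0 1) := by
    apply ContinuousOn.div continuousOn_const
    · exact ((continuousOn_const.mul continuousOn_id).mul
        (Real.continuousOn_log.mono (fun x hx => ne_of_gt hx.1)))
    · exact hdenne
  -- main eventual identity
  have hmain : ∀ᶠ y : ℝ in atTop,
      G (1 / y) / (Real.log y) ^ ((1:ℝ) / α)
        = Real.exp (-(I - ∫ x in (0:ℝ)..(1/y), f x) - c) := by
    filter_upwards [eventually_gt_atTop (max 1 (1/lam))] with y hy
    have hy1 : 1 < y := lt_of_le_of_lt (le_max_left _ _) hy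
    have hy0 : 0 < y := lt_trans one_pos hy1
    have hainv : (0:ℝ) < 1 / y := by positivity
    have halam : 1 / y < lam := by
      rw [div_lt_iff₀ hy0]
      have := lt_of_le_of_lt (le_max_right (1:ℝ) (1/lam)) hy
      have h := mul_lt_mul_of_pos_left this hlam
      rw [mul_one_div, div_self hlam.ne'] at h
      linarith
    have hsub : Set.uIcc (1/y) lam ⊆ Set.Ioo (0:ℝ) 1 := by
      rw [Set.uIcc_of_le halam.le]
      intro x hx
      exact ⟨lt_of_lt_of_le hainv hx.1, lt_of_le_of_lt hx.2 hlam1⟩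
    have hΨii : IntervalIntegrable (fun u => 1 / Ψ u) volume (1/y) lam :=
      (hΨcont.mono hsub).intervalIntegrable
    have hgii : IntervalIntegrable g volume (1/y) lam :=
      (hgcont.mono hsub).intervalIntegrable
    have hfii : IntervalIntegrable f volume (1/y) lam := by
      rw [intervalIntegrable_iff_integrableOn_Ioc_of_le halam.le]
      exact hint.mono_set (Set.Ioc_subset_Ioc hainv.le le_rfl)
    -- compute the g integral
    have hgval : ∫ u in (1/y)..lam, g u
        = (1/α) * Real.log (-Real.log lam) - (1/α) * Real.log (-Real.log (1/y)) := by
      have : ∀ u ∈ Set.uIcc (1/y) lam,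
          HasDerivAt (fun u => (1/α) * Real.log (-Real.log u)) (g u) u := by
        intro u hu
        have hu' := hsub hu
        have hu0 : u ≠ 0 := hu'.1.ne'
        have hlogne : -Real.log u ≠ 0 := by
          have := Real.log_neg hu'.1 hu'.2; linarith
        have h1 : HasDerivAt (fun u : ℝ => -Real.log u) (-u⁻¹) u :=
          (Real.hasDerivAt_log hu0).neg
        have h2 : HasDerivAt (fun u : ℝ => Real.log (-Real.log u))
            (-u⁻¹ / -Real.log u) u := h1.log hlogne
        have h3 := h2.const_mul (1/α)
        refine h3.congr_deriv ?_
        have hune : u ≠ 0 := hu0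
        have hlne : Real.log u ≠ 0 := by
          intro h; apply hlogne; rw [h]; ring
        simp only [hg]
        field_simp
      rw [intervalIntegral.integral_eq_sub_of_hasDerivAt this hgii]
    -- split the Ψ integral
    have hsplit : ∫ u in (1/y)..lam, 1 / Ψ u
        = (∫ u in (1/y)..lam, f u) + ∫ u in (1/y)..lam, g u := by
      rw [← intervalIntegral.integral_add hfii hgii]
      apply intervalIntegral.integral_congr
      intro x _
      simp only [hf, hg]
      ring
    -- f integral in terms of the primitive
    have hfval : ∫ u in (1/y)..lam, f u = I - ∫ x in (0:ℝ)..(1/y), f x := by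
      have h01 : IntervalIntegrable f volume 0 (1/y) := by
        rw [intervalIntegrable_iff_integrableOn_Ioc_of_le hainv.le]
        exact hint.mono_set (Set.Ioc_subset_Ioc le_rfl halam.le)
      have := intervalIntegral.integral_add_adjacent_intervals h01 hfii
      have hIeq : I = ∫ x in (0:ℝ)..lam, f x := by
        rw [intervalIntegral.integral_of_le hlam.le]
      rw [hIeq, ← this]; ring
    have hlogy : 0 < Real.log y := Real.log_pos hy1
    have hloginv : -Real.log (1/y) = Real.log y := by
      rw [one_div, Real.log_inv]; ring
    have hloglam : -Real.log lam = Real.log (1/lam) := by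
      rw [one_div, Real.log_inv]
    have hrpow : (Real.log y) ^ ((1:ℝ)/α) = Real.exp ((1/α) * Real.log (Real.log y)) := by
      rw [Real.rpow_def_of_pos hlogy]; ring_nf
    rw [hG, hrpow, hsplit, hgval, hfval, hloginv, hloglam, ← Real.exp_sub]
    congr 1
    simp only [hc]
    ring
  -- the limit
  rw [show Real.exp (-(∫ u in Set.Ioc (0:ℝ) lam, (1 / Ψ u - 1 / (α * u * Real.log u)))
        - (1 / α) * Real.log (Real.log (1 / lam))) = Real.exp (-(I - 0) - c) by
      simp [hI, hc, hf]]
  apply Tendsto.congr' (hmain.mono fun y h => h.symm)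
  apply (Real.continuous_exp.tendsto _).comp
  apply Tendsto.sub_const
  apply Tendsto.neg
  apply Tendsto.const_sub
  -- P y = ∫ 0..(1/y) f → 0
  have h0mem : (0:ℝ) ∈ Set.uIcc 0 lam := Set.left_mem_uIcc
  have hcw : ContinuousWithinAt (fun b => ∫ x in (0:ℝ)..b, f x) (Set.uIcc 0 lam) 0 :=
    hprim 0 h0mem
  have h00 : (∫ x in (0:ℝ)..(0:ℝ), f x) = 0 := intervalIntegral.integral_same
  have htend : Tendsto (fun y : ℝ => 1 / y) atTop (nhdsWithin 0 (Set.uIcc 0 lam)) := by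
    apply tendsto_nhdsWithin_of_tendsto_nhds_of_eventually_within
    · simpa [one_div] using tendsto_inv_atTop_zero
    · filter_upwards [eventually_gt_atTop (max 0 (1/lam))] with y hy
      have hy0 : 0 < y := lt_of_le_of_lt (le_max_left _ _) hy
      have h1 : 0 ≤ 1 / y := by positivity
      have h2 : 1 / y ≤ lam := by
        rw [div_le_iff₀ hy0]
        have := lt_of_le_of_lt (le_max_right (0:ℝ) (1/lam)) hy
        calc (1:ℝ) = lam * (1/lam) := by field_simp
          _ ≤ lam * y := by nlinarith
      rw [Set.uIcc_of_le hlam.le]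
      exact ⟨h1, h2⟩
  have := hcw.tendsto.comp htend
  rw [h00] at this
  exact this
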